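/- Let k ≥ 1 and n ≥ 2k+1. If G is a finite simple graph on n vertices containing no matching of k+1 edges (every set of pairwise disjoint edges of G has at most k edges), then e(G) ≤ max{ C(2k+1,2), C(k,2) + (n−k)·k }, where C(a,2)=a(a−1)/2. -/

import Mathlib

open Finset

namespace EGM

/-- Replace `j` by `i` in a 2-set (when `j ∈ e`, `i ∉ e`). -/
def cmp (i j : ℕ) (e : Finset ℕ) : Finset ℕ :=
  if j ∈ e ∧ i ∉ e then insert i (e.erase j) else e

/-- The (i,j)-shift of a family. -/
def shiftF (i j : ℕ) (F : Finset (Finset ℕ)) : Finset (Finset ℕ) :=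
  F.filter (fun e => cmp i j e ∈ F) ∪ (F.filter (fun e => cmp i j e ∉ F)).image (cmp i j)

lemma cmp_of_active {i j : ℕ} {e : Finset ℕ} (hj : j ∈ e) (hi : i ∉ e) :
    cmp i j e = insert i (e.erase j) := by simp [cmp, hj, hi]

lemma cmp_eq_self {i j : ℕ} {e : Finset ℕ} (h : j ∉ e ∨ i ∈ e) : cmp i j e = e := by
  rcases h with h | h
  · simp [cmp, h]
  · simp only [cmp, ite_eq_right_iff]
    rintro ⟨-, hi⟩; exact absurd h hi

lemma cmp_ne_iff {i j : ℕ} {e : Finset ℕ} :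
    cmp i j e ≠ e ↔ (j ∈ e ∧ i ∉ e) := by
  constructor
  · intro h
    by_contra hc
    push_neg at hc
    rcases Decidable.em (j ∈ e) with hj | hj
    · exact h (cmp_eq_self (Or.inr (hc hj)))
    · exact h (cmp_eq_self (Or.inl hj))
  · rintro ⟨hj, hi⟩
    rw [cmp_of_active hj hi]
    intro h
    have : i ∈ e := h ▸ mem_insert_self i _
    exact hi this

lemma mem_cmp_active {i j x : ℕ} {e : Finset ℕ} (hj : j ∈ e) (hi : i ∉ e) :
    x ∈ cmp i j e ↔ x = i ∨ (x ∈ e ∧ x ≠ j) := by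
  rw [cmp_of_active hj hi]
  simp [mem_insert, mem_erase, and_comm]

lemma uncmp {i j : ℕ} {e : Finset ℕ} (hj : j ∈ e) (hi : i ∉ e) :
    insert j ((cmp i j e).erase i) = e := by
  rw [cmp_of_active hj hi]
  rw [Finset.erase_insert (by simp [mem_erase, hi])]
  exact Finset.insert_erase hj

lemma mem_shiftF {i j : ℕ} {F : Finset (Finset ℕ)} {e : Finset ℕ} :
    e ∈ shiftF i j F ↔ (e ∈ F ∧ cmp i j e ∈ F) ∨ (∃ f ∈ F, cmp i j f ∉ F ∧ cmp i j f = e) := by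
  simp only [shiftF, mem_union, mem_filter, mem_image]
  tauto

/-- Members of the "moved" part contain `i`, miss `j`, and are not in `F`. -/
lemma moved_part {i j : ℕ} {F : Finset (Finset ℕ)} {f : Finset ℕ}
    (hf : f ∈ F) (hmv : cmp i j f ∉ F) : j ∈ f ∧ i ∉ f := by
  by_contra hc
  push_neg at hc
  rcases Decidable.em (j ∈ f) with hj | hj
  · exact hmv (by rw [cmp_eq_self (Or.inr (hc hj))]; exact hf)
  · exact hmv (by rw [cmp_eq_self (Or.inl hj)]; exact hf)

lemma shiftF_card (i j : ℕ) (F : Finset (Finset ℕ)) :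
    (shiftF i j F).card = F.card := by
  rw [shiftF, card_union_of_disjoint, card_image_of_injOn]
  · rw [card_filter_add_card_filter_not]
  · intro e he f hf hef
    simp only [mem_coe, mem_filter] at he hf
    obtain ⟨hj₁, hi₁⟩ := moved_part he.1 he.2
    obtain ⟨hj₂, hi₂⟩ := moved_part hf.1 hf.2
    rw [← uncmp hj₁ hi₁, ← uncmp hj₂ hi₂, hef]
  · rw [Finset.disjoint_left]
    intro e he hee
    simp only [mem_filter] at he
    simp only [mem_image, mem_filter] at hee
    obtain ⟨f, ⟨hf, hmv⟩, hfe⟩ := hee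
    exact hmv (hfe ▸ he.1)

/-- total weight, used for termination of the shifting process. -/
def wt (F : Finset (Finset ℕ)) : ℕ := F.sum (fun e => ∑ x ∈ e, x)

lemma shiftF_wt_lt {i j : ℕ} (hij : i < j) {F : Finset (Finset ℕ)}
    (hne : shiftF i j F ≠ F) : wt (shiftF i j F) < wt F := by
  classical
  have hdisj : Disjoint (F.filter (fun e => cmp i j e ∈ F))
      ((F.filter (fun e => cmp i j e ∉ F)).image (cmp i j)) := by
    rw [Finset.disjoint_left]
    intro e he hee
    simp only [mem_filter] at he
    simp only [mem_image, mem_filter] at hee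
    obtain ⟨f, ⟨hf, hmv⟩, hfe⟩ := hee
    exact hmv (hfe ▸ he.1)
  have hinj : Set.InjOn (cmp i j) (F.filter (fun e => cmp i j e ∉ F)) := by
    intro e he f hf hef
    simp only [mem_coe, mem_filter] at he hf
    obtain ⟨hj₁, hi₁⟩ := moved_part he.1 he.2
    obtain ⟨hj₂, hi₂⟩ := moved_part hf.1 hf.2
    rw [← uncmp hj₁ hi₁, ← uncmp hj₂ hi₂, hef]
  have hnonempty : (F.filter (fun e => cmp i j e ∉ F)).Nonempty := by
    rcases Finset.eq_empty_or_nonempty (F.filter (fun e => cmp i j e ∉ F)) with h | h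
    · exfalso
      apply hne
      rw [shiftF, h, image_empty, union_empty]
      apply Finset.filter_true_of_mem
      intro e he
      by_contra hmv
      have : e ∈ F.filter (fun e => cmp i j e ∉ F) := mem_filter.2 ⟨he, hmv⟩
      simp [h] at this
    · exact h
  have hlt : ∀ e ∈ F.filter (fun e => cmp i j e ∉ F),
      (∑ x ∈ cmp i j e, x) < ∑ x ∈ e, x := by
    intro e he
    simp only [mem_filter] at he
    obtain ⟨hj₁, hi₁⟩ := moved_part he.1 he.2
    rw [cmp_of_active hj₁ hi₁]
    have hinotin : i ∉ e.erase j := fun h => hi₁ (mem_of_mem_erase h)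
    rw [Finset.sum_insert hinotin]
    have h1 : j + ∑ x ∈ e.erase j, x = ∑ x ∈ e, x := Finset.add_sum_erase _ (fun x => x) hj₁
    omega
  have : wt (shiftF i j F) = (F.filter (fun e => cmp i j e ∈ F)).sum (fun e => ∑ x ∈ e, x)
      + (F.filter (fun e => cmp i j e ∉ F)).sum (fun e => ∑ x ∈ cmp i j e, x) := by
    rw [wt, shiftF, Finset.sum_union hdisj, Finset.sum_image hinj]
  rw [this]
  have hsplit : wt F = (F.filter (fun e => cmp i j e ∈ F)).sum (fun e => ∑ x ∈ e, x)
      + (F.filter (fun e => cmp i j e ∉ F)).sum (fun e => ∑ x ∈ e, x) := by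
    rw [wt, Finset.sum_filter_add_sum_filter_not]
  rw [hsplit]
  exact Nat.add_lt_add_left (Finset.sum_lt_sum_of_nonempty hnonempty hlt) _


/-- families of 2-subsets of `range n` whose matchings all have ≤ `k` edges. -/
def Good (n k : ℕ) (F : Finset (Finset ℕ)) : Prop :=
  (∀ e ∈ F, e.card = 2 ∧ e ⊆ range n) ∧
  (∀ M : Finset (Finset ℕ), M ⊆ F →
    (∀ e ∈ M, ∀ f ∈ M, e ≠ f → Disjoint e f) → M.card ≤ k)

lemma shape_pair {n : ℕ} {e : Finset ℕ} (h : e.card = 2) (hsub : e ⊆ range n) :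
    ∃ a b, a < b ∧ b < n ∧ e = {a, b} := by
  obtain ⟨x, y, hxy, rfl⟩ := Finset.card_eq_two.1 h
  have hx : x < n := by simpa using hsub (by simp)
  have hy : y < n := by simpa using hsub (by simp)
  rcases lt_or_gt_of_ne hxy with h' | h'
  · exact ⟨x, y, h', hy, rfl⟩
  · exact ⟨y, x, h', hx, Finset.pair_comm x y⟩

lemma erase_pair_left {a b : ℕ} (hab : a ≠ b) : ({a, b} : Finset ℕ).erase a = {b} := by
  rw [show ({a, b} : Finset ℕ) = insert a {b} from rfl]
  exact Finset.erase_insert (by simp [hab])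

lemma erase_pair_right {a b : ℕ} (hab : a ≠ b) : ({a, b} : Finset ℕ).erase b = {a} := by
  rw [Finset.pair_comm]
  exact erase_pair_left hab.symm

/-- Shifted closure property. -/
def Shifted (F : Finset (Finset ℕ)) : Prop :=
  ∀ i j e, i < j → e ∈ F → j ∈ e → i ∉ e → insert i (e.erase j) ∈ F

lemma shifted_of_fixed {F : Finset (Finset ℕ)}
    (h : ∀ i j, i < j → shiftF i j F = F) : Shifted F := by
  intro i j e hij he hje hie
  by_contra hc
  have hcmp : cmp i j e = insert i (e.erase j) := cmp_of_active hje hie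
  have : e ∈ shiftF i j F := (h i j hij).symm ▸ he
  rw [mem_shiftF] at this
  rcases this with ⟨-, hin⟩ | ⟨f, hf, hmv, hfe⟩
  · rw [hcmp] at hin; exact hc hin
  · obtain ⟨hjf, hif⟩ := moved_part hf hmv
    have hcf : cmp i j f = insert i (f.erase j) := cmp_of_active hjf hif
    have : j ∉ cmp i j f := by
      rw [hcf]
      intro hmem
      rcases Finset.mem_insert.1 hmem with h | h
      · omega
      · exact (Finset.mem_erase.1 h).1 rfl
    rw [hfe] at this
    exact this hje

lemma step_left {F : Finset (Finset ℕ)} (hs : Shifted F) {a b a' : ℕ}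
    (h : ({a, b} : Finset ℕ) ∈ F) (ha : a' < a) (hb : a' ≠ b) (hab : a ≠ b) :
    ({a', b} : Finset ℕ) ∈ F := by
  have h2 := hs a' a {a, b} ha h (by simp) (by simp [Nat.ne_of_lt ha, hb])
  rwa [erase_pair_left hab, show insert a' ({b} : Finset ℕ) = {a', b} from rfl] at h2

lemma step_right {F : Finset (Finset ℕ)} (hs : Shifted F) {a b b' : ℕ}
    (h : ({a, b} : Finset ℕ) ∈ F) (hb : b' < b) (hba : b' ≠ a) (hab : a ≠ b) :
    ({a, b'} : Finset ℕ) ∈ F := by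
  have h2 := hs b' b {a, b} hb h (by simp) (by simp [Nat.ne_of_lt hb, hba])
  rwa [erase_pair_right hab, show insert b' ({a} : Finset ℕ) = {b', a} from rfl,
    Finset.pair_comm] at h2

/-- Domination: a shifted family is closed under coordinatewise decrease. -/
lemma dom {F : Finset (Finset ℕ)} (hs : Shifted F) {a b a' b' : ℕ}
    (he : ({a, b} : Finset ℕ) ∈ F) (hab : a < b) (ha : a' ≤ a) (hb : b' ≤ b)
    (hab' : a' < b') : ({a', b'} : Finset ℕ) ∈ F := by
  rcases eq_or_lt_of_le hb with rfl | hbb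
  · rcases eq_or_lt_of_le ha with rfl | haa
    · exact he
    · exact step_left hs he haa (by omega) hab.ne
  · rcases Decidable.em (b' = a) with rfl | hba
    · have h1 : ({a', b} : Finset ℕ) ∈ F := step_left hs he (by omega) (by omega) hab.ne
      exact step_right hs h1 hbb (by omega) (by omega)
    · have h1 : ({a, b'} : Finset ℕ) ∈ F := step_right hs he hbb hba hab.ne
      rcases eq_or_lt_of_le ha with rfl | haa
      · exact h1
      · exact step_left hs h1 haa (by omega) (fun h => hba h.symm)

lemma moved_mem_i {i j : ℕ} (hij : i < j) {F : Finset (Finset ℕ)} {f : Finset ℕ}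
    (hf : f ∈ F) (hmv : cmp i j f ∉ F) :
    i ∈ cmp i j f ∧ j ∉ cmp i j f := by
  obtain ⟨hjf, hif⟩ := moved_part hf hmv
  rw [cmp_of_active hjf hif]
  constructor
  · exact mem_insert_self _ _
  · intro hmem
    rcases Finset.mem_insert.1 hmem with h | h
    · omega
    · exact (Finset.mem_erase.1 h).1 rfl

lemma shiftF_matching {i j k : ℕ} (hij : i < j) {F : Finset (Finset ℕ)}
    (hF : ∀ M : Finset (Finset ℕ), M ⊆ F →
      (∀ e ∈ M, ∀ f ∈ M, e ≠ f → Disjoint e f) → M.card ≤ k)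
    (M : Finset (Finset ℕ)) (hM : M ⊆ shiftF i j F)
    (hdisj : ∀ e ∈ M, ∀ f ∈ M, e ≠ f → Disjoint e f) : M.card ≤ k := by
  classical
  by_cases hMF : ∀ e ∈ M, e ∈ F
  · exact hF M (fun e he => hMF e he) hdisj
  · push_neg at hMF
    obtain ⟨e₀, he₀M, he₀F⟩ := hMF
    -- e₀ comes from the moved part
    have he₀s := hM he₀M
    rw [mem_shiftF] at he₀s
    rcases he₀s with ⟨h, -⟩ | ⟨f₀, hf₀F, hmv₀, hfe₀⟩
    · exact absurd h he₀F
    obtain ⟨hjf₀, hif₀⟩ := moved_part hf₀F hmv₀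
    have hie₀ : i ∈ e₀ ∧ j ∉ e₀ := by
      rw [← hfe₀]; exact moved_mem_i hij hf₀F hmv₀
    have hf₀eq : f₀ = insert j (e₀.erase i) := by
      rw [← hfe₀]; exact (uncmp hjf₀ hif₀).symm
    have hmem_f₀ : ∀ x, x ∈ f₀ ↔ x = j ∨ (x ∈ e₀ ∧ x ≠ i) := by
      intro x
      rw [hf₀eq]
      simp only [Finset.mem_insert, Finset.mem_erase]
      tauto
    set rest := M.erase e₀ with hrest
    have hrestM : ∀ f ∈ rest, f ∈ M ∧ f ≠ e₀ := by
      intro f hf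
      have := Finset.mem_erase.1 hf
      exact ⟨this.2, this.1⟩
    have hdisj₀ : ∀ f ∈ rest, Disjoint e₀ f := by
      intro f hf
      obtain ⟨hfM, hfne⟩ := hrestM f hf
      exact (hdisj f hfM e₀ he₀M hfne).symm
    have hresti : ∀ f ∈ rest, i ∉ f := by
      intro f hf hi
      exact (Finset.disjoint_right.1 (hdisj₀ f hf)) hi hie₀.1
    have hrestF : ∀ f ∈ rest, f ∈ F := by
      intro f hf
      by_contra hfF
      have hfs := hM (hrestM f hf).1
      rw [mem_shiftF] at hfs
      rcases hfs with ⟨h, -⟩ | ⟨g, hgF, hmvg, hge⟩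
      · exact hfF h
      · have := (moved_mem_i hij hgF hmvg).1
        rw [hge] at this
        exact hresti f hf this
    have hcard_rest : rest.card + 1 = M.card := by
      rw [hrest, Finset.card_erase_of_mem he₀M]
      have : 1 ≤ M.card := Finset.card_pos.2 ⟨e₀, he₀M⟩
      omega
    by_cases hjrest : ∀ f ∈ rest, j ∉ f
    · -- replace e₀ by f₀
      have hf₀rest : f₀ ∉ rest := fun h => hjrest f₀ h hjf₀
      have key := hF (insert f₀ rest) ?_ ?_
      · rw [Finset.card_insert_of_notMem hf₀rest] at key
        omega
      · intro e he
        rcases Finset.mem_insert.1 he with rfl | h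
        · exact hf₀F
        · exact hrestF e h
      · intro e he f hf hef
        have haux : ∀ g ∈ rest, Disjoint f₀ g := by
          intro g hg
          rw [Finset.disjoint_left]
          intro x hx hxg
          rcases (hmem_f₀ x).1 hx with rfl | ⟨hxe₀, -⟩
          · exact hjrest g hg hxg
          · exact (Finset.disjoint_left.1 (hdisj₀ g hg)) hxe₀ hxg
        rcases Finset.mem_insert.1 he with rfl | he' <;>
          rcases Finset.mem_insert.1 hf with rfl | hf'
        · exact absurd rfl hef
        · exact haux f hf'
        · exact (haux e he').symm
        · exact hdisj e (hrestM e he').1 f (hrestM f hf').1 hef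
    · -- there is e₁ ∈ rest containing j; swap it too
      push_neg at hjrest
      obtain ⟨e₁, he₁rest, hje₁⟩ := hjrest
      have he₁F : e₁ ∈ F := hrestF e₁ he₁rest
      have hie₁ : i ∉ e₁ := hresti e₁ he₁rest
      -- cmp of e₁ is in F
      have he₁cmp : insert i (e₁.erase j) ∈ F := by
        have hfs := hM (hrestM e₁ he₁rest).1
        rw [mem_shiftF] at hfs
        rcases hfs with ⟨-, h⟩ | ⟨g, hgF, hmvg, hge⟩
        · rwa [cmp_of_active hje₁ hie₁] at h
        · exfalso
          have := (moved_mem_i hij hgF hmvg).2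
          rw [hge] at this
          exact this hje₁
      set e₁' := insert i (e₁.erase j) with he₁'
      have hmem_e₁' : ∀ x, x ∈ e₁' ↔ x = i ∨ (x ∈ e₁ ∧ x ≠ j) := by
        intro x
        rw [he₁']
        simp only [Finset.mem_insert, Finset.mem_erase]
        tauto
      set R := rest.erase e₁ with hR
      have hRsub : ∀ f ∈ R, f ∈ rest ∧ f ≠ e₁ := by
        intro f hf
        have := Finset.mem_erase.1 hf
        exact ⟨this.2, this.1⟩
      have hRj : ∀ f ∈ R, j ∉ f := by
        intro f hf hjf
        obtain ⟨hfrest, hfne⟩ := hRsub f hf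
        exact (Finset.disjoint_left.1
          (hdisj f (hrestM f hfrest).1 e₁ (hrestM e₁ he₁rest).1 hfne)) hjf hje₁
      -- disjointness of the two new edges
      have hd01 : Disjoint f₀ e₁' := by
        rw [Finset.disjoint_left]
        intro x hx hx'
        rcases (hmem_f₀ x).1 hx with rfl | ⟨hxe₀, hxi⟩
        · rcases (hmem_e₁' x).1 hx' with h | ⟨-, h⟩
          · omega
          · exact h rfl
        · rcases (hmem_e₁' x).1 hx' with rfl | ⟨hxe₁, -⟩
          · exact hxi rfl
          · have hne : e₁ ≠ e₀ := (hrestM e₁ he₁rest).2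
            exact (Finset.disjoint_left.1 (hdisj₀ e₁ he₁rest)) hxe₀ hxe₁
      have hd0R : ∀ f ∈ R, Disjoint f₀ f := by
        intro f hf
        rw [Finset.disjoint_left]
        intro x hx hxf
        rcases (hmem_f₀ x).1 hx with rfl | ⟨hxe₀, -⟩
        · exact hRj f hf hxf
        · exact (Finset.disjoint_left.1 (hdisj₀ f (hRsub f hf).1)) hxe₀ hxf
      have hd1R : ∀ f ∈ R, Disjoint e₁' f := by
        intro f hf
        rw [Finset.disjoint_left]
        intro x hx hxf
        rcases (hmem_e₁' x).1 hx with rfl | ⟨hxe₁, -⟩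
        · exact hresti f (hRsub f hf).1 hxf
        · obtain ⟨hfrest, hfne⟩ := hRsub f hf
          exact (Finset.disjoint_left.1
            (hdisj e₁ (hrestM e₁ he₁rest).1 f (hrestM f hfrest).1 (Ne.symm hfne))) hxe₁ hxf
      have hf₀notin : f₀ ∉ insert e₁' R := by
        intro h
        rcases Finset.mem_insert.1 h with h | h
        · have : j ∈ e₁' := h ▸ ((hmem_f₀ j).2 (Or.inl rfl))
          rcases (hmem_e₁' j).1 this with h' | ⟨-, h'⟩
          · omega
          · exact h' rfl
        · exact hRj f₀ h ((hmem_f₀ j).2 (Or.inl rfl))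
      have he₁'notin : e₁' ∉ R := by
        intro h
        exact hresti e₁' (hRsub e₁' h).1 ((hmem_e₁' i).2 (Or.inl rfl))
      have hcardR : R.card + 1 = rest.card := by
        rw [hR, Finset.card_erase_of_mem he₁rest]
        have : 1 ≤ rest.card := Finset.card_pos.2 ⟨e₁, he₁rest⟩
        omega
      have key := hF (insert f₀ (insert e₁' R)) ?_ ?_
      · rw [Finset.card_insert_of_notMem hf₀notin,
          Finset.card_insert_of_notMem he₁'notin] at key
        omega
      · intro e he
        rcases Finset.mem_insert.1 he with rfl | he'
        · exact hf₀F
        rcases Finset.mem_insert.1 he' with rfl | he''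
        · exact he₁cmp
        · exact hrestF e (hRsub e he'').1
      · intro e he f hf hef
        rcases Finset.mem_insert.1 he with rfl | he'
        · rcases Finset.mem_insert.1 hf with rfl | hf'
          · exact absurd rfl hef
          rcases Finset.mem_insert.1 hf' with rfl | hf''
          · exact hd01
          · exact hd0R f hf''
        rcases Finset.mem_insert.1 he' with rfl | he''
        · rcases Finset.mem_insert.1 hf with rfl | hf'
          · exact hd01.symm
          rcases Finset.mem_insert.1 hf' with rfl | hf''
          · exact absurd rfl hef
          · exact hd1R f hf''
        · rcases Finset.mem_insert.1 hf with rfl | hf'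
          · exact (hd0R e he'').symm
          rcases Finset.mem_insert.1 hf' with rfl | hf''
          · exact (hd1R e he'').symm
          · exact hdisj e (hrestM e (hRsub e he'').1).1 f (hrestM f (hRsub f hf'').1).1 hef

lemma shiftF_good {n k i j : ℕ} (hij : i < j) (hjn : j < n) {F : Finset (Finset ℕ)}
    (hg : Good n k F) : Good n k (shiftF i j F) := by
  constructor
  · intro e he
    rw [mem_shiftF] at he
    rcases he with ⟨heF, -⟩ | ⟨f, hfF, hmv, hfe⟩
    · exact hg.1 e heF
    · obtain ⟨hjf, hif⟩ := moved_part hfF hmv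
      obtain ⟨hc, hsub⟩ := hg.1 f hfF
      rw [← hfe, cmp_of_active hjf hif]
      constructor
      · rw [Finset.card_insert_of_notMem (fun h => hif (mem_of_mem_erase h)),
          Finset.card_erase_of_mem hjf, hc]
      · intro x hx
        rcases Finset.mem_insert.1 hx with rfl | hx'
        · exact Finset.mem_range.2 (lt_trans hij hjn)
        · exact hsub (mem_of_mem_erase hx')
  · exact fun M hM hd => shiftF_matching hij hg.2 M hM hd

lemma two_mul_choose_two (m : ℕ) : 2 * m.choose 2 = m * (m - 1) := by
  rw [Nat.choose_two_right]
  rcases m with - | m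
  · rfl
  · simp only [Nat.add_sub_cancel]
    rw [Nat.mul_div_cancel' (by simpa [Nat.mul_comm] using (Nat.even_mul_succ_self m).two_dvd)]

lemma choose_two_succ (m : ℕ) : (m + 1).choose 2 = m.choose 2 + m := by
  rw [Nat.choose_succ_succ]
  simp [Nat.choose_one_right, Nat.add_comm]

lemma choose_split (a b : ℕ) : (a + b).choose 2 = a.choose 2 + a * b + b.choose 2 := by
  induction b with
  | zero => simp
  | succ b ih =>
    rw [← Nat.add_assoc, choose_two_succ, ih, choose_two_succ]
    ring


lemma count_bound (t k n : ℕ) (ht : t ≤ k) (hn : 2*k+2 ≤ n) :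
    (n.choose 2 - (n-t).choose 2) + (2*(k-t)+1).choose 2 ≤
      max ((2*k+1).choose 2) (k.choose 2 + (n-k)*k) := by
  have key : n.choose 2 - (n-t).choose 2 = t.choose 2 + t*(n-t) := by
    have hnt : n = t + (n - t) := by omega
    calc n.choose 2 - (n-t).choose 2
        = (t + (n-t)).choose 2 - (n-t).choose 2 := by rw [← hnt]
      _ = t.choose 2 + t*(n-t) + (n-t).choose 2 - (n-t).choose 2 := by rw [choose_split]
      _ = t.choose 2 + t*(n-t) := by rw [Nat.add_sub_cancel]
  rw [key]
  obtain ⟨s, rfl⟩ : ∃ s, k = t + s := ⟨k - t, by omega⟩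
  have hs : t + s - t = s := by omega
  rw [hs]
  obtain ⟨m, rfl⟩ : ∃ m, n = 2*(t+s)+2+m := ⟨n - (2*(t+s)+2), by omega⟩
  rcases Nat.eq_zero_or_pos t with rfl | htpos
  · apply le_max_of_le_left
    simp
  obtain ⟨t', rfl⟩ : ∃ t', t = t'+1 := ⟨t - 1, by omega⟩
  have e1 : 2*(t'+1+s)+2+m - (t'+1) = t' + 2*s + 3 + m := by omega
  have e2 : 2*(t'+1+s)+2+m - (t'+1+s) = t' + s + 3 + m := by omega
  rw [e1, e2]
  rcases le_or_gt (2*m + 2) (t'+1+s) with hcase | hcase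
  · -- the clique bound wins
    apply le_max_of_le_left
    refine Nat.le_of_mul_le_mul_left ?_ (show 0 < 2 by norm_num)
    simp only [Nat.mul_add, two_mul_choose_two]
    simp only [Nat.add_sub_cancel]
    have hint := Nat.mul_le_mul_left (t'+1) hcase
    nlinarith [hint]
  · apply le_max_of_le_right
    refine Nat.le_of_mul_le_mul_left ?_ (show 0 < 2 by norm_num)
    simp only [Nat.mul_add, two_mul_choose_two]
    simp only [Nat.add_sub_cancel]
    have e3 : t' + 1 + s - 1 = t' + s := by omega
    rw [e3]
    have hint := Nat.mul_le_mul_left s (show s ≤ 2*t' + 2*m + 1 by omega)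
    nlinarith [hint]


lemma shifted_bound {n k : ℕ} (hn : 2*k+2 ≤ n) {F : Finset (Finset ℕ)}
    (hg : Good n k F) (hs : Shifted F) :
    F.card ≤ max ((2*k+1).choose 2) (k.choose 2 + (n-k)*k) := by
  classical
  -- find t ≤ k with {t, 2k+1-t} ∉ F
  by_cases hall : ∀ s, s ≤ k → ({s, 2*k+1-s} : Finset ℕ) ∈ F
  · exfalso
    set M : Finset (Finset ℕ) := (range (k+1)).image (fun s => ({s, 2*k+1-s} : Finset ℕ))
      with hM
    have hinj : Set.InjOn (fun s => ({s, 2*k+1-s} : Finset ℕ)) (range (k+1)) := by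
      intro a ha b hb hab
      simp only [mem_coe, mem_range] at ha hb
      simp only at hab
      have : a ∈ ({b, 2*k+1-b} : Finset ℕ) := by
        rw [← hab]; exact mem_insert_self _ _
      simp only [Finset.mem_insert, Finset.mem_singleton] at this
      omega
    have hcard : M.card = k + 1 := by
      rw [hM, Finset.card_image_of_injOn hinj, Finset.card_range]
    have hle := hg.2 M ?_ ?_
    · omega
    · intro e he
      rw [hM] at he
      obtain ⟨a, ha, rfl⟩ := Finset.mem_image.1 he
      exact hall a (by simp only [mem_range] at ha; omega)
    · intro e he f hf hef
      rw [hM] at he hf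
      obtain ⟨a, ha, rfl⟩ := Finset.mem_image.1 he
      obtain ⟨b, hb, rfl⟩ := Finset.mem_image.1 hf
      simp only [mem_range] at ha hb
      have hab : a ≠ b := fun h => hef (by rw [h])
      rw [Finset.disjoint_left]
      intro x hx hx'
      simp only [Finset.mem_insert, Finset.mem_singleton] at hx hx'
      omega
  · push_neg at hall
    obtain ⟨t, ht, htF⟩ := hall
    set Pmeet : Finset (Finset ℕ) :=
      (powersetCard 2 (range n)).filter (fun e => ¬ (e ⊆ Ico t n)) with hPmeet
    set Pin : Finset (Finset ℕ) := powersetCard 2 (Ico t (2*k+1-t)) with hPin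
    have hsub : F ⊆ Pmeet ∪ Pin := by
      intro e he
      obtain ⟨hc2, hsubn⟩ := hg.1 e he
      obtain ⟨a, b, hab, hbn, rfl⟩ := shape_pair hc2 hsubn
      by_cases hat : a < t
      · apply Finset.mem_union_left
        rw [hPmeet, mem_filter, Finset.mem_powersetCard]
        refine ⟨⟨hsubn, hc2⟩, ?_⟩
        intro hss
        have := hss (Finset.mem_insert_self a _)
        rw [Finset.mem_Ico] at this
        omega
      · apply Finset.mem_union_right
        push_neg at hat
        have hbk : b < 2*k+1-t := by
          by_contra hbk
          push_neg at hbk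
          exact htF (dom hs he hab hat hbk (by omega))
        rw [hPin, Finset.mem_powersetCard]
        refine ⟨?_, hc2⟩
        intro x hx
        simp only [Finset.mem_insert, Finset.mem_singleton] at hx
        rw [Finset.mem_Ico]
        rcases hx with rfl | rfl <;> omega
    have hPincard : Pin.card = (2*(k-t)+1).choose 2 := by
      rw [hPin, Finset.card_powersetCard, Nat.card_Ico]
      congr 1
      omega
    have hPmeetcard : Pmeet.card = n.choose 2 - (n-t).choose 2 := by
      have hsplit := Finset.card_filter_add_card_filter_not
        (s := powersetCard 2 (range n)) (p := fun e => e ⊆ Ico t n)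
      have heq : (powersetCard 2 (range n)).filter (fun e => e ⊆ Ico t n)
          = powersetCard 2 (Ico t n) := by
        ext e
        rw [mem_filter, Finset.mem_powersetCard, Finset.mem_powersetCard]
        constructor
        · rintro ⟨⟨-, hc⟩, hss⟩
          exact ⟨hss, hc⟩
        · rintro ⟨hss, hc⟩
          refine ⟨⟨hss.trans ?_, hc⟩, hss⟩
          rw [Finset.range_eq_Ico]
          exact Finset.Ico_subset_Ico (by omega) le_rfl
      rw [heq, Finset.card_powersetCard, Nat.card_Ico, Finset.card_powersetCard,
        Finset.card_range] at hsplit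
      rw [hPmeet]
      omega
    calc F.card ≤ (Pmeet ∪ Pin).card := Finset.card_le_card hsub
      _ ≤ Pmeet.card + Pin.card := Finset.card_union_le _ _
      _ = (n.choose 2 - (n-t).choose 2) + (2*(k-t)+1).choose 2 := by
          rw [hPmeetcard, hPincard]
      _ ≤ _ := count_bound t k n ht hn

lemma shiftF_eq_self_of_notin {i j : ℕ} {F : Finset (Finset ℕ)}
    (h : ∀ e ∈ F, j ∉ e) : shiftF i j F = F := by
  have hcmp : ∀ e ∈ F, cmp i j e = e := fun e he => cmp_eq_self (Or.inl (h e he))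
  rw [shiftF]
  have h1 : F.filter (fun e => cmp i j e ∈ F) = F := by
    apply Finset.filter_true_of_mem
    intro e he
    rw [hcmp e he]; exact he
  have h2 : F.filter (fun e => cmp i j e ∉ F) = ∅ := by
    apply Finset.filter_false_of_mem
    intro e he
    rw [hcmp e he]
    simp [he]
  rw [h1, h2, Finset.image_empty, Finset.union_empty]

lemma main_aux (W : ℕ) : ∀ (F : Finset (Finset ℕ)) (n k : ℕ), wt F ≤ W → Good n k F →
    2*k+2 ≤ n → F.card ≤ max ((2*k+1).choose 2) (k.choose 2 + (n-k)*k) := by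
  induction W with
  | zero =>
    intro F n k hW hg hn
    by_cases hsh : ∀ i j : ℕ, i < j → shiftF i j F = F
    · exact shifted_bound hn hg (shifted_of_fixed hsh)
    · push_neg at hsh
      obtain ⟨i, j, hij, hne⟩ := hsh
      have := shiftF_wt_lt hij hne
      omega
  | succ W ih =>
    intro F n k hW hg hn
    by_cases hsh : ∀ i j : ℕ, i < j → shiftF i j F = F
    · exact shifted_bound hn hg (shifted_of_fixed hsh)
    · push_neg at hsh
      obtain ⟨i, j, hij, hne⟩ := hsh
      have hjn : j < n := by
        by_contra hjn
        push_neg at hjn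
        apply hne
        apply shiftF_eq_self_of_notin
        intro e he hje
        have := (hg.1 e he).2 hje
        rw [Finset.mem_range] at this
        omega
      have hwt := shiftF_wt_lt hij hne
      have := ih (shiftF i j F) n k (by omega) (shiftF_good hij hjn hg) hn
      rwa [shiftF_card] at this


end EGM

open EGM Finset

/-- **Erdős–Gallai theorem for matchings.** For `n ≥ 2k+1`, if `G` is an
`n`-vertex graph in which every matching has at most `k` edges, then
`e(G) ≤ max{C(2k+1, 2), C(k, 2) + (n−k)k}`. -/
theorem erdos_gallai_matching (n k : ℕ) (hn : 2 * k + 1 ≤ n)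
    (G : SimpleGraph (Fin n)) [DecidableRel G.Adj]
    (hmatch : ∀ M : G.Subgraph, M.IsMatching → M.edgeSet.ncard ≤ k) :
    G.edgeFinset.card ≤ max (Nat.choose (2 * k + 1) 2) (Nat.choose k 2 + (n - k) * k) := by
  classical
  set P : Finset (Fin n × Fin n) :=
    Finset.univ.filter (fun p => G.Adj p.1 p.2 ∧ p.1 < p.2) with hP
  set F₀ : Finset (Finset ℕ) :=
    P.image (fun p => ({(p.1 : ℕ), (p.2 : ℕ)} : Finset ℕ)) with hF₀
  have hPmem : ∀ p : Fin n × Fin n, p ∈ P ↔ G.Adj p.1 p.2 ∧ p.1 < p.2 := by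
    intro p; rw [hP, mem_filter]; simp
  -- cardinality: F₀.card = G.edgeFinset.card
  have hinj : Set.InjOn (fun p : Fin n × Fin n => ({(p.1 : ℕ), (p.2 : ℕ)} : Finset ℕ)) P := by
    intro p hp q hq hpq
    simp only [mem_coe, hPmem] at hp hq
    simp only at hpq
    have h1 : (p.1 : ℕ) ∈ ({(q.1 : ℕ), (q.2 : ℕ)} : Finset ℕ) := by
      rw [← hpq]; exact mem_insert_self _ _
    have h2 : (p.2 : ℕ) ∈ ({(q.1 : ℕ), (q.2 : ℕ)} : Finset ℕ) := by
      rw [← hpq]; simp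
    have h3 : (q.1 : ℕ) ∈ ({(p.1 : ℕ), (p.2 : ℕ)} : Finset ℕ) := by
      rw [hpq]; exact mem_insert_self _ _
    simp only [Finset.mem_insert, Finset.mem_singleton] at h1 h2 h3
    have hp12 : (p.1 : ℕ) < (p.2 : ℕ) := hp.2
    have hq12 : (q.1 : ℕ) < (q.2 : ℕ) := hq.2
    have : (p.1 : ℕ) = (q.1 : ℕ) ∧ (p.2 : ℕ) = (q.2 : ℕ) := by omega
    exact Prod.ext (Fin.val_injective this.1) (Fin.val_injective this.2)
  have hcard1 : F₀.card = P.card := Finset.card_image_of_injOn hinj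
  have hcard2 : P.card = G.edgeFinset.card := by
    apply Finset.card_bij (fun (p : Fin n × Fin n) _ => s(p.1, p.2))
    · intro p hp
      rw [SimpleGraph.mem_edgeFinset, SimpleGraph.mem_edgeSet]
      exact ((hPmem p).1 hp).1
    · intro p hp q hq hpq
      rw [Sym2.eq_iff] at hpq
      rcases hpq with ⟨h1, h2⟩ | ⟨h1, h2⟩
      · exact Prod.ext h1 h2
      · exfalso
        have e1 : (p.1 : ℕ) = (q.2 : ℕ) := congrArg Fin.val h1
        have e2 : (p.2 : ℕ) = (q.1 : ℕ) := congrArg Fin.val h2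
        have l1 := ((hPmem p).1 hp).2
        have l2 := ((hPmem q).1 hq).2
        rw [Fin.lt_def] at l1 l2
        omega
    · intro e he
      induction e with
      | _ u v =>
        rw [SimpleGraph.mem_edgeFinset, SimpleGraph.mem_edgeSet] at he
        rcases lt_or_gt_of_ne (G.ne_of_adj he) with h | h
        · exact ⟨(u, v), (hPmem _).2 ⟨he, h⟩, rfl⟩
        · exact ⟨(v, u), (hPmem _).2 ⟨he.symm, h⟩, Sym2.eq_swap⟩
  -- Good n k F₀
  have hgood : Good n k F₀ := by
    constructor
    · intro e he
      rw [hF₀] at he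
      obtain ⟨p, hp, rfl⟩ := Finset.mem_image.1 he
      have hlt : (p.1 : ℕ) < (p.2 : ℕ) := ((hPmem p).1 hp).2
      constructor
      · exact Finset.card_pair (by omega)
      · intro x hx
        simp only [Finset.mem_insert, Finset.mem_singleton] at hx
        rw [Finset.mem_range]
        rcases hx with rfl | rfl
        · exact p.1.isLt
        · exact p.2.isLt
    · intro M hM hdisj
      -- build a matching subgraph of G from M
      have hMF : ∀ e ∈ M, ∃ p : Fin n × Fin n, G.Adj p.1 p.2 ∧ (p.1 : ℕ) < (p.2 : ℕ) ∧
          e = {(p.1 : ℕ), (p.2 : ℕ)} := by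
        intro e he
        obtain ⟨p, hp, rfl⟩ := Finset.mem_image.1 (hM he)
        exact ⟨p, ((hPmem p).1 hp).1, ((hPmem p).1 hp).2, rfl⟩
      set H : G.Subgraph :=
        { verts := {v : Fin n | ∃ e ∈ M, (v : ℕ) ∈ e}
          Adj := fun u v => G.Adj u v ∧ ({(u : ℕ), (v : ℕ)} : Finset ℕ) ∈ M
          adj_sub := fun h => h.1
          edge_vert := fun h => ⟨_, h.2, Finset.mem_insert_self _ _⟩
          symm := ⟨fun u v h => ⟨h.1.symm, Finset.pair_comm ((u : Fin n) : ℕ) ((v : Fin n) : ℕ) ▸ h.2⟩⟩ } with hH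
      have hHmatch : H.IsMatching := by
        intro v hv
        obtain ⟨e, heM, hve⟩ := hv
        obtain ⟨p, hadj, hlt, rfl⟩ := hMF e heM
        have huniq : ∀ (a b : Fin n), ({(v : ℕ), (a : ℕ)} : Finset ℕ) ∈ M →
            G.Adj v a → ({(v : ℕ), (b : ℕ)} : Finset ℕ) ∈ M → G.Adj v b → a = b := by
          intro a b ha hadja hb hadjb
          have heq : ({(v : ℕ), (a : ℕ)} : Finset ℕ) = {(v : ℕ), (b : ℕ)} := by
            by_contra hne
            exact (Finset.disjoint_left.1 (hdisj _ ha _ hb hne))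
              (Finset.mem_insert_self _ _) (Finset.mem_insert_self _ _)
          have : (a : ℕ) ∈ ({(v : ℕ), (b : ℕ)} : Finset ℕ) := by
            rw [← heq]; simp
          simp only [Finset.mem_insert, Finset.mem_singleton] at this
          rcases this with h | h
          · exact absurd (Fin.val_injective h).symm (G.ne_of_adj hadja)
          · exact Fin.val_injective h
        simp only [Finset.mem_insert, Finset.mem_singleton] at hve
        rcases hve with hv1 | hv2
        · have hv1' : v = p.1 := Fin.val_injective hv1
          subst hv1'
          refine ⟨p.2, ⟨hadj, heM⟩, ?_⟩
          intro y hy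
          exact huniq y p.2 hy.2 hy.1 heM hadj
        · have hv2' : v = p.2 := Fin.val_injective hv2
          subst hv2'
          refine ⟨p.1, ⟨hadj.symm, by rwa [Finset.pair_comm]⟩, ?_⟩
          intro y hy
          exact huniq y p.1 hy.2 hy.1 (by rwa [Finset.pair_comm]) hadj.symm
      -- transfer cardinality
      have hkey := hmatch H hHmatch
      set ψ : Sym2 (Fin n) → Finset ℕ :=
        Sym2.lift ⟨fun u v => ({(u : ℕ), (v : ℕ)} : Finset ℕ),
          fun u v => Finset.pair_comm _ _⟩ with hψ
      have himg : ψ '' H.edgeSet = (M : Set (Finset ℕ)) := by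
        ext e
        constructor
        · rintro ⟨x, hx, rfl⟩
          induction x with
          | _ u v =>
            rw [SimpleGraph.Subgraph.mem_edgeSet] at hx
            exact hx.2
        · intro he
          obtain ⟨p, hadj, hlt, rfl⟩ := hMF e he
          exact ⟨s(p.1, p.2), SimpleGraph.Subgraph.mem_edgeSet.2 ⟨hadj, he⟩, rfl⟩
      have hinjψ : Set.InjOn ψ H.edgeSet := by
        intro x hx y hy hxy
        induction x with
        | _ u v =>
          induction y with
          | _ u' v' =>
            rw [SimpleGraph.Subgraph.mem_edgeSet] at hx hy
            have huv : u ≠ v := G.ne_of_adj hx.1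
            have huv' : u' ≠ v' := G.ne_of_adj hy.1
            simp only [hψ, Sym2.lift_mk] at hxy
            have h1 : (u : ℕ) ∈ ({(u' : ℕ), (v' : ℕ)} : Finset ℕ) := by
              rw [← hxy]; exact Finset.mem_insert_self _ _
            have h2 : (v : ℕ) ∈ ({(u' : ℕ), (v' : ℕ)} : Finset ℕ) := by
              rw [← hxy]; simp
            have h3 : (u' : ℕ) ∈ ({(u : ℕ), (v : ℕ)} : Finset ℕ) := by
              rw [hxy]; exact Finset.mem_insert_self _ _
            simp only [Finset.mem_insert, Finset.mem_singleton] at h1 h2 h3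
            have hne : (u : ℕ) ≠ (v : ℕ) := fun h => huv (Fin.val_injective h)
            have hne' : (u' : ℕ) ≠ (v' : ℕ) := fun h => huv' (Fin.val_injective h)
            rw [Sym2.eq_iff]
            have : ((u:ℕ) = (u':ℕ) ∧ (v:ℕ) = (v':ℕ)) ∨ ((u:ℕ) = (v':ℕ) ∧ (v:ℕ) = (u':ℕ)) := by
              omega
            rcases this with ⟨ha, hb⟩ | ⟨ha, hb⟩
            · exact Or.inl ⟨Fin.val_injective ha, Fin.val_injective hb⟩
            · exact Or.inr ⟨Fin.val_injective ha, Fin.val_injective hb⟩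
      calc M.card = (M : Set (Finset ℕ)).ncard := (Set.ncard_coe_finset M).symm
        _ = (ψ '' H.edgeSet).ncard := congrArg Set.ncard himg.symm
        _ = H.edgeSet.ncard := Set.ncard_image_of_injOn hinjψ
        _ ≤ k := hkey
  -- conclude
  rcases eq_or_lt_of_le hn with heq | hlt
  · apply le_max_of_le_left
    have h1 := SimpleGraph.card_edgeFinset_le_card_choose_two (G := G)
    rw [Fintype.card_fin] at h1
    have h2 : (2*k+1).choose 2 = n.choose 2 := by rw [heq]
    rw [h2]
    exact h1
  · have := main_aux (wt F₀) F₀ n k le_rfl hgood (by omega)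
    rwa [hcard1, hcard2] at this
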